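/- Let C be a finite non-degenerate projective configuration with lines l₀,…,lₙ. For every a in the subgroup U of A generated by the elements a⁽⁰⁾_{i,p}, a⁽¹⁾_{i,p}, a⁽²⁾_{i,p₁,p₂}, and for every (i,p) ∈ 𝒜, the element τ(a; i, p) = [[xᵢ, a(i,p)], s_p] + [xᵢ, Σ_{j : lⱼ incident to p} [xⱼ, a(j,p)]] of the free Lie ring L lies in R₃. -/

import Mathlib

open scoped Classical

namespace Rybnikov8

/- A finite non-degenerate projective configuration with lines `l₀, …, lₙ`
(indexed by `Fin (n+1)`) and points of type `P`, incidence `inc`.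
`L` is the free Lie ring on `x₁, …, xₙ` (indexed by `Fin n`, with `x i`
corresponding to `x_{i+1}`, i.e. to the line `l_{i.succ}`), and `H = ℤⁿ`. -/

variable {n : ℕ} {P : Type*}

abbrev L (n : ℕ) := FreeLieAlgebra ℤ (Fin n)

/-- The generator `x_{i+1}` of the free Lie ring. -/
noncomputable def x (i : Fin n) : L n := FreeLieAlgebra.of ℤ i

/-- The embedding of `H = ℤⁿ` into the free Lie ring, `v ↦ Σᵢ vᵢ • xᵢ`. -/
noncomputable def hmap (v : Fin n → ℤ) : L n := ∑ i, v i • x i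

/-- `s_p = Σ_{j : l_j incident to p} x_j` (sum over `1 ≤ j ≤ n`). -/
noncomputable def s (inc : Fin (n + 1) → P → Prop) [Fintype P] (p : P) : L n :=
  ∑ j ∈ Finset.univ.filter (fun j : Fin n => inc j.succ p), x j

/-- `𝒜 = {(i,p) : p ∈ 𝒫₀, l_{i.succ} incident to p}`. -/
def A' (inc : Fin (n + 1) → P → Prop) : Type _ :=
  {z : Fin n × P // ¬ inc 0 z.2 ∧ inc z.1.succ z.2}

/-- The additive subgroup `R₂ ⊆ L`, spanned by the `[xᵢ, s_p]`, `(i,p) ∈ 𝒜`. -/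
noncomputable def R2 (inc : Fin (n + 1) → P → Prop) [Fintype P] : AddSubgroup (L n) :=
  AddSubgroup.closure {y | ∃ z : A' inc, y = ⁅x z.val.1, s inc z.val.2⁆}

/-- The additive subgroup `R₃ = [H, R₂] ⊆ L`. -/
noncomputable def R3 (inc : Fin (n + 1) → P → Prop) [Fintype P] : AddSubgroup (L n) :=
  AddSubgroup.closure {y | ∃ (k : Fin n) (r : L n), r ∈ R2 inc ∧ y = ⁅x k, r⁆}

/-- `s_p` as an element of `H = ℤⁿ`. -/
noncomputable def sH (inc : Fin (n + 1) → P → Prop) (p : P) : Fin n → ℤ :=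
  fun k => if inc k.succ p then 1 else 0

/-- The generators `a⁽⁰⁾_{i,p}` of `U` (for `(i,p) ∈ 𝒜`):
`a⁽⁰⁾_{i,p}(j,q) = δ_{ij} δ_{pq} xᵢ`. -/
noncomputable def a0 (inc : Fin (n + 1) → P → Prop) (z : A' inc) :
    A' inc → (Fin n → ℤ) :=
  fun w => if w.val = z.val then Pi.single z.val.1 1 else 0

/-- The generators `a⁽¹⁾_{i,p}` of `U` (for `1 ≤ i ≤ n`, `p ∈ 𝒫₀`):
`a⁽¹⁾_{i,p}(j,q) = δ_{pq} xᵢ`. -/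
noncomputable def a1 (inc : Fin (n + 1) → P → Prop) (i : Fin n) (p : P) :
    A' inc → (Fin n → ℤ) :=
  fun w => if w.val.2 = p then Pi.single i 1 else 0

/-- The generators `a⁽²⁾_{i,p₁,p₂}` of `U` (for `(i,p₁), (i,p₂) ∈ 𝒜`):
`a⁽²⁾_{i,p₁,p₂}(j,q) = δ_{ij} δ_{p₁ q} s_{p₂}`. -/
noncomputable def a2 (inc : Fin (n + 1) → P → Prop) (i : Fin n) (p₁ p₂ : P) :
    A' inc → (Fin n → ℤ) :=
  fun w => if w.val = (i, p₁) then sH inc p₂ else 0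

/-- The subgroup `U` of `A = H^𝒜` generated by the `a⁽⁰⁾`, `a⁽¹⁾`, `a⁽²⁾`. -/
noncomputable def U (inc : Fin (n + 1) → P → Prop) :
    AddSubgroup (A' inc → (Fin n → ℤ)) :=
  AddSubgroup.closure
    ({f | ∃ z : A' inc, f = a0 inc z} ∪
     {f | ∃ (i : Fin n) (p : P), ¬ inc 0 p ∧ f = a1 inc i p} ∪
     {f | ∃ (i : Fin n) (p₁ p₂ : P), ¬ inc 0 p₁ ∧ inc i.succ p₁ ∧
        ¬ inc 0 p₂ ∧ inc i.succ p₂ ∧ f = a2 inc i p₁ p₂})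

/-- `τ(a; i, p) = [[xᵢ, a(i,p)], s_p] + [xᵢ, Σ_{j : l_j ∋ p} [x_j, a(j,p)]]`. -/
noncomputable def tau (inc : Fin (n + 1) → P → Prop) [Fintype P]
    (a : A' inc → (Fin n → ℤ)) (z : A' inc) : L n :=
  ⁅⁅x z.val.1, hmap (a z)⁆, s inc z.val.2⁆ +
    ⁅x z.val.1, ∑ j : Fin n,
      if h : inc j.succ z.val.2 then ⁅x j, hmap (a ⟨(j, z.val.2), ⟨z.prop.1, h⟩⟩)⁆
      else 0⁆

section Aux

variable {n : ℕ} {P : Type*}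

lemma lie_sum' {ι : Type*} (t : Finset ι) (y : L n) (f : ι → L n) :
    ⁅y, ∑ i ∈ t, f i⁆ = ∑ i ∈ t, ⁅y, f i⁆ := by
  classical
  induction t using Finset.induction with
  | empty => simp
  | insert _ _ h ih => simp [Finset.sum_insert h, ih]

lemma sum_lie' {ι : Type*} (t : Finset ι) (f : ι → L n) (y : L n) :
    ⁅∑ i ∈ t, f i, y⁆ = ∑ i ∈ t, ⁅f i, y⁆ := by
  classical
  induction t using Finset.induction with
  | empty => simp
  | insert _ _ h ih => simp [Finset.sum_insert h, ih]

lemma hmap_add (v w : Fin n → ℤ) : hmap (v + w) = hmap v + hmap w := by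
  simp [hmap, add_smul, Finset.sum_add_distrib]

lemma hmap_neg (v : Fin n → ℤ) : hmap (-v) = -hmap v := by
  simp [hmap, Finset.sum_neg_distrib]

lemma hmap_zero : hmap (0 : Fin n → ℤ) = 0 := by simp [hmap]

lemma hmap_single (i : Fin n) : hmap (Pi.single i 1) = x i := by
  classical
  simp only [hmap, Pi.single_apply, ite_smul, zero_smul, one_smul]
  simp

lemma hmap_sH [Fintype P] (inc : Fin (n + 1) → P → Prop) (p : P) :
    hmap (sH inc p) = s inc p := by
  classical
  simp only [hmap, sH, ite_smul, zero_smul, one_smul, s]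
  rw [← Finset.sum_filter]

lemma mem_R2 [Fintype P] (inc : Fin (n + 1) → P → Prop) (z : A' inc) :
    ⁅x z.val.1, s inc z.val.2⁆ ∈ R2 inc :=
  AddSubgroup.subset_closure ⟨z, rfl⟩

lemma mem_R3 [Fintype P] (inc : Fin (n + 1) → P → Prop) (k : Fin n) (r : L n)
    (hr : r ∈ R2 inc) : ⁅x k, r⁆ ∈ R3 inc :=
  AddSubgroup.subset_closure ⟨k, r, hr, rfl⟩

lemma tau_add [Fintype P] (inc : Fin (n + 1) → P → Prop)
    (a b : A' inc → (Fin n → ℤ)) (z : A' inc) :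
    tau inc (a + b) z = tau inc a z + tau inc b z := by
  simp only [tau, Pi.add_apply, hmap_add, lie_add, add_lie]
  rw [show (∑ j : Fin n,
      if h : inc j.succ z.val.2 then
        ⁅x j, hmap ((a + b) ⟨(j, z.val.2), ⟨z.prop.1, h⟩⟩)⁆
      else 0) =
      (∑ j : Fin n, if h : inc j.succ z.val.2 then ⁅x j, hmap (a ⟨(j, z.val.2), ⟨z.prop.1, h⟩⟩)⁆ else 0)
      + (∑ j : Fin n, if h : inc j.succ z.val.2 then ⁅x j, hmap (b ⟨(j, z.val.2), ⟨z.prop.1, h⟩⟩)⁆ else 0)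
    from by
      rw [← Finset.sum_add_distrib]
      refine Finset.sum_congr rfl fun j _ => ?_
      split
      · exact (congrArg (fun v => ⁅x j, v⁆) (hmap_add _ _)).trans (lie_add _ _ _)
      · exact (add_zero 0).symm]
  rw [lie_add]
  abel

lemma tau_neg [Fintype P] (inc : Fin (n + 1) → P → Prop)
    (a : A' inc → (Fin n → ℤ)) (z : A' inc) :
    tau inc (-a) z = -tau inc a z := by
  simp only [tau, Pi.neg_apply, hmap_neg, lie_neg, neg_lie]
  rw [show (∑ j : Fin n,
      if h : inc j.succ z.val.2 then
        ⁅x j, hmap ((-a) ⟨(j, z.val.2), ⟨z.prop.1, h⟩⟩)⁆ else 0) =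
      -(∑ j : Fin n, if h : inc j.succ z.val.2 then ⁅x j, hmap (a ⟨(j, z.val.2), ⟨z.prop.1, h⟩⟩)⁆ else 0)
    from by
      rw [← Finset.sum_neg_distrib]
      refine Finset.sum_congr rfl fun j _ => ?_
      split
      · exact (congrArg (fun v => ⁅x j, v⁆) (hmap_neg _)).trans (lie_neg _ _)
      · exact neg_zero.symm]
  rw [lie_neg]
  abel

lemma tau_zero [Fintype P] (inc : Fin (n + 1) → P → Prop) (z : A' inc) :
    tau inc (0 : A' inc → (Fin n → ℤ)) z = 0 := by
  simp [tau, hmap_zero]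
  rw [Finset.sum_eq_zero fun j _ => by
    split
    · exact (congrArg (fun v => ⁅x j, v⁆) hmap_zero).trans (lie_zero _)
    · rfl]
  simp

end Aux

/-- **Proposition 2.3 of Rybnikov's paper.** For a finite non-degenerate projective
configuration, `U ⊆ ker τ̃`: for every `a ∈ U` and every `(i,p) ∈ 𝒜`, the element
`τ(a; i, p)` of the free Lie ring lies in `R₃`. -/
theorem U_subset_ker_tau
    [Fintype P] (inc : Fin (n + 1) → P → Prop)
    (unique_meet : ∀ i j : Fin (n + 1), i ≠ j → ∃! p : P, inc i p ∧ inc j p)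
    (point_on_two : ∀ p : P, ∃ i j : Fin (n + 1), i ≠ j ∧ inc i p ∧ inc j p)
    (nondeg : ∃ p q : P, p ≠ q)
    (a : A' inc → (Fin n → ℤ)) (ha : a ∈ U inc) (z : A' inc) :
    tau inc a z ∈ R3 inc := by
  classical
  refine AddSubgroup.closure_induction (fun f hf => ?_) ?_
    (fun f g _ _ hfz hgz => ?_) (fun f _ hfz => ?_) ha
  · obtain (hf | hf) | hf := hf
    · -- a⁰ generators: τ = 0
      obtain ⟨z₀, rfl⟩ := hf
      have h1 : ⁅x z.val.1, hmap (a0 inc z₀ z)⁆ = 0 := by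
        simp only [a0]
        split_ifs with h
        · have hh : z.val.1 = z₀.val.1 := by rw [h]
          rw [hmap_single, hh]; exact lie_self _
        · simp [hmap_zero]
      have h2 : (∑ j : Fin n, if h : inc j.succ z.val.2 then
          ⁅x j, hmap (a0 inc z₀ ⟨(j, z.val.2), ⟨z.prop.1, h⟩⟩)⁆ else 0) = 0 := by
        refine Finset.sum_eq_zero fun j _ => ?_
        split_ifs with h
        · simp only [a0]
          split_ifs with h'
          · have hh : j = z₀.val.1 := congrArg Prod.fst h'
            rw [hmap_single, ← hh]; exact lie_self _
          · simp [hmap_zero]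
        · rfl
      rw [tau, h1, h2]
      simpa using zero_mem (R3 inc)
    · -- a¹ generators
      obtain ⟨i₀, p₀, h0, rfl⟩ := hf
      by_cases hp : z.val.2 = p₀
      · have hz : a1 inc i₀ p₀ z = Pi.single i₀ 1 := by simp [a1, hp]
        have h2 : (∑ j : Fin n, if h : inc j.succ z.val.2 then
            ⁅x j, hmap (a1 inc i₀ p₀ ⟨(j, z.val.2), ⟨z.prop.1, h⟩⟩)⁆ else 0)
            = ⁅s inc z.val.2, x i₀⁆ := by
          rw [s, sum_lie', Finset.sum_filter]
          refine Finset.sum_congr rfl fun j _ => ?_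
          split_ifs with h
          · simp [a1, hp, hmap_single]
          · rfl
        rw [tau, hz, hmap_single, h2]
        have hskew : ⁅s inc z.val.2, x i₀⁆ = -⁅x i₀, s inc z.val.2⁆ :=
          (lie_skew _ _).symm
        have key : ⁅⁅x z.val.1, x i₀⁆, s inc z.val.2⁆ +
            ⁅x z.val.1, ⁅s inc z.val.2, x i₀⁆⁆
            = -⁅x i₀, ⁅x z.val.1, s inc z.val.2⁆⁆ := by
          rw [hskew, lie_lie, lie_neg]; abel
        rw [key]
        exact neg_mem (mem_R3 inc i₀ _ (mem_R2 inc z))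
      · have hz : a1 inc i₀ p₀ z = 0 := by simp [a1, hp]
        have h2 : (∑ j : Fin n, if h : inc j.succ z.val.2 then
            ⁅x j, hmap (a1 inc i₀ p₀ ⟨(j, z.val.2), ⟨z.prop.1, h⟩⟩)⁆ else 0) = 0 := by
          refine Finset.sum_eq_zero fun j _ => ?_
          split_ifs with h
          · simp [a1, hp, hmap_zero]
          · rfl
        rw [tau, hz, hmap_zero, h2]
        simpa using zero_mem (R3 inc)
    · -- a² generators
      obtain ⟨i₀, p₁, p₂, h01, hi1, h02, hi2, rfl⟩ := hf
      have hr2 : ⁅x i₀, s inc p₂⁆ ∈ R2 inc := mem_R2 inc ⟨(i₀, p₂), ⟨h02, hi2⟩⟩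
      by_cases hp : z.val.2 = p₁
      · have hinc : inc i₀.succ z.val.2 := by rw [hp]; exact hi1
        have hside : ∀ j ∈ (Finset.univ : Finset (Fin n)), j ≠ i₀ →
            (if h : inc j.succ z.val.2 then
              ⁅x j, hmap (a2 inc i₀ p₁ p₂ ⟨(j, z.val.2), ⟨z.prop.1, h⟩⟩)⁆ else 0) = 0 := by
          intro j _ hj
          split_ifs with h
          · simp [a2, Prod.ext_iff, hj, hmap_zero]
          · rfl
        have h2 : (∑ j : Fin n, if h : inc j.succ z.val.2 then
            ⁅x j, hmap (a2 inc i₀ p₁ p₂ ⟨(j, z.val.2), ⟨z.prop.1, h⟩⟩)⁆ else 0)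
            = ⁅x i₀, s inc p₂⁆ := by
          rw [Finset.sum_eq_single_of_mem i₀ (Finset.mem_univ i₀) hside, dif_pos hinc]
          simp [a2, hp, hmap_sH]
        by_cases hii : z.val.1 = i₀
        · have hz : a2 inc i₀ p₁ p₂ z = sH inc p₂ := by
            have : z.val = (i₀, p₁) := Prod.ext hii hp
            simp [a2, this]
          rw [tau, hz, hmap_sH, h2, hii]
          refine add_mem ?_ (mem_R3 inc i₀ _ hr2)
          have hexp : ⁅⁅x i₀, s inc p₂⁆, s inc z.val.2⁆ =
              ∑ k ∈ Finset.univ.filter (fun j : Fin n => inc j.succ z.val.2),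
                ⁅⁅x i₀, s inc p₂⁆, x k⁆ :=
            lie_sum' _ _ _
          rw [hexp]
          apply AddSubgroup.sum_mem
          intro k _
          have hk2 : ⁅⁅x i₀, s inc p₂⁆, x k⁆ = -⁅x k, ⁅x i₀, s inc p₂⁆⁆ :=
            (lie_skew _ _).symm
          rw [hk2]
          exact neg_mem (mem_R3 inc k _ hr2)
        · have hz : a2 inc i₀ p₁ p₂ z = 0 := by
            have : z.val ≠ (i₀, p₁) := fun h => hii (congrArg Prod.fst h)
            simp [a2, this]
          rw [tau, hz, hmap_zero, h2]
          simp only [lie_zero, zero_lie, zero_add]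
          exact mem_R3 inc z.val.1 _ hr2
      · have hz : a2 inc i₀ p₁ p₂ z = 0 := by
          have : z.val ≠ (i₀, p₁) := fun h => hp (congrArg Prod.snd h)
          simp [a2, this]
        have h2 : (∑ j : Fin n, if h : inc j.succ z.val.2 then
            ⁅x j, hmap (a2 inc i₀ p₁ p₂ ⟨(j, z.val.2), ⟨z.prop.1, h⟩⟩)⁆ else 0) = 0 := by
          refine Finset.sum_eq_zero fun j _ => ?_
          split_ifs with h
          · have : (j, z.val.2) ≠ (i₀, p₁) := fun hh => hp (congrArg Prod.snd hh)
            simp [a2, this, hmap_zero]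
          · rfl
        rw [tau, hz, hmap_zero, h2]
        simpa using zero_mem (R3 inc)
  · rw [tau_zero]; exact zero_mem _
  · rw [tau_add]; exact add_mem hfz hgz
  · rw [tau_neg]; exact neg_mem hfz


end Rybnikov8
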